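/- Let V be a Hilbert space, a : V × V → ℝ an elliptic (coercive) and continuous bilinear form, and F ∈ V*. Let (V_ℓ)_{ℓ∈ℕ} be a nested sequence of closed subspaces of V (V_ℓ ⊆ V_{ℓ+1}), and let V_∞ be the closure of their union. For each ℓ ∈ ℕ ∪ {∞}, there exists a unique u_ℓ ∈ V_ℓ with a(u_ℓ, v) = F(v) for all v ∈ V_ℓ, and ‖u_∞ − u_ℓ‖_V → 0 as ℓ → ∞. -/

import Mathlib

open Filter InnerProductSpace

private def SymV (V : Type*) := V

theorem aux_existsUnique {V : Type*} [NormedAddCommGroup V] [InnerProductSpace ℝ V]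
    [CompleteSpace V] (a : V →L[ℝ] V →L[ℝ] ℝ)
    (α : ℝ) (hα : 0 < α) (hcoer : ∀ v : V, α * ‖v‖ ^ 2 ≤ a v v)
    (F : V →L[ℝ] ℝ) (S : Submodule ℝ V) (hS : IsClosed (S : Set V)) :
    ∃ u ∈ S, ∀ v ∈ S, a u v = F v := by
  haveI : CompleteSpace S := hS.completeSpace_coe
  set B : S →L[ℝ] S →L[ℝ] ℝ := ((a.comp S.subtypeL).flip.comp S.subtypeL).flip with hB
  have hBapp : ∀ x y : S, B x y = a x y := fun x y => rfl
  have coercive : IsCoercive B := by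
    refine ⟨α, hα, fun u => ?_⟩
    rw [hBapp]
    calc α * ‖u‖ * ‖u‖ = α * ‖(u:V)‖^2 := by rw [Submodule.norm_coe]; ring
    _ ≤ a u u := hcoer _
  set e := coercive.continuousLinearEquivOfBilin
  set y := (toDual ℝ S).symm (F.comp S.subtypeL)
  refine ⟨(e.symm y : S), (e.symm y).2, fun v hv => ?_⟩
  have h1 : B (e.symm y) ⟨v, hv⟩ = F v := by
    rw [← coercive.continuousLinearEquivOfBilin_apply (e.symm y) ⟨v, hv⟩]
    simp [e, y]
  exact h1

theorem exists_sol {V : Type*} [NormedAddCommGroup V] [NormedSpace ℝ V] [CompleteSpace V]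
    (a : V →ₗ[ℝ] V →ₗ[ℝ] ℝ)
    (Ccont : ℝ) (hcont : ∀ u v : V, |a u v| ≤ Ccont * ‖u‖ * ‖v‖)
    (α : ℝ) (hα : 0 < α) (hcoer : ∀ v : V, α * ‖v‖ ^ 2 ≤ a v v)
    (F : V →L[ℝ] ℝ) (S : Submodule ℝ V) (hS : IsClosed (S : Set V)) :
    ∃ u ∈ S, ∀ v ∈ S, a u v = F v := by
  classical
  set K := max Ccont α with hKdef
  have hK : 0 < K := lt_of_lt_of_le hα (le_max_right _ _)
  have hcontK : ∀ u v : V, |a u v| ≤ K * ‖u‖ * ‖v‖ := fun u v =>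
    (hcont u v).trans (by
      have : Ccont * (‖u‖ * ‖v‖) ≤ K * (‖u‖ * ‖v‖) :=
        mul_le_mul_of_nonneg_right (le_max_left _ _) (by positivity)
      linarith [this])
  have hannn : ∀ v : V, 0 ≤ a v v := fun v => le_trans (by positivity) (hcoer v)
  letI : AddCommGroup (SymV V) := inferInstanceAs (AddCommGroup V)
  letI : Module ℝ (SymV V) := inferInstanceAs (Module ℝ V)
  let j : SymV V →ₗ[ℝ] V :=
    { toFun := fun x => x
      map_add' := fun _ _ => rfl
      map_smul' := fun _ _ => rfl }
  let j' : V →ₗ[ℝ] SymV V :=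
    { toFun := fun x => x
      map_add' := fun _ _ => rfl
      map_smul' := fun _ _ => rfl }
  let core : InnerProductSpace.Core ℝ (SymV V) :=
  { inner := fun x y => (a (j x) (j y) + a (j y) (j x)) / 2
    conj_inner_symm := fun x y => by simp; ring
    re_inner_nonneg := fun x => by
      simp only [RCLike.re_to_real]
      have := hannn (j x); simp; linarith
    definite := fun x hx => by
      have h : (a (j x) (j x) + a (j x) (j x)) / 2 = 0 := hx
      clear hx
      have h0 : a (j x) (j x) = 0 := by
        rw [div_eq_zero_iff] at h
        rcases h with h | h
        · linarith
        · norm_num at h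
      have := hcoer (j x)
      have hsq : ‖j x‖ ^ 2 = 0 := le_antisymm (by nlinarith) (sq_nonneg _)
      have hn : ‖j x‖ = 0 := by
        have := sq_eq_zero_iff.mp hsq
        exact this
      have : j x = 0 := norm_eq_zero.mp hn
      exact this
    add_left := fun x y z => by simp [map_add, LinearMap.add_apply]; ring
    smul_left := fun x y r => by simp [map_smul, LinearMap.smul_apply]; ring }
  letI : NormedAddCommGroup (SymV V) := core.toNormedAddCommGroup
  letI : InnerProductSpace ℝ (SymV V) := InnerProductSpace.ofCore core.toCore
  -- the new norm squared equals a x x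
  have hn2 : ∀ x : SymV V, ‖x‖ ^ 2 = a (j x) (j x) := by
    intro x
    rw [← real_inner_self_eq_norm_sq]
    show (a (j x) (j x) + a (j x) (j x)) / 2 = a (j x) (j x)
    ring
  have hnormnn : ∀ x : SymV V, (0:ℝ) ≤ ‖x‖ := fun x => norm_nonneg x
  -- bounds between the two norms
  have hlow : ∀ x : SymV V, Real.sqrt α * ‖j x‖ ≤ ‖x‖ := by
    intro x
    have h1 : (Real.sqrt α * ‖j x‖) ^ 2 ≤ ‖x‖ ^ 2 := by
      rw [mul_pow, Real.sq_sqrt hα.le, hn2]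
      exact hcoer (j x)
    calc Real.sqrt α * ‖j x‖ = Real.sqrt ((Real.sqrt α * ‖j x‖) ^ 2) :=
          (Real.sqrt_sq (by positivity)).symm
      _ ≤ Real.sqrt (‖x‖ ^ 2) := Real.sqrt_le_sqrt h1
      _ = ‖x‖ := Real.sqrt_sq (hnormnn x)
  have hsqa : 0 < Real.sqrt α := Real.sqrt_pos.mpr hα
  have hlow' : ∀ x : SymV V, ‖j x‖ ≤ (Real.sqrt α)⁻¹ * ‖x‖ := by
    intro x
    rw [inv_mul_eq_div, le_div_iff₀ hsqa]
    linarith [hlow x]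
  have hup : ∀ x : SymV V, ‖x‖ ≤ Real.sqrt K * ‖j x‖ := by
    intro x
    have h1 : ‖x‖ ^ 2 ≤ (Real.sqrt K * ‖j x‖) ^ 2 := by
      rw [mul_pow, Real.sq_sqrt hK.le, hn2]
      have := hcontK (j x) (j x)
      have h2 := le_abs_self (a (j x) (j x))
      nlinarith
    calc ‖x‖ = Real.sqrt (‖x‖ ^ 2) := (Real.sqrt_sq (hnormnn x)).symm
      _ ≤ Real.sqrt ((Real.sqrt K * ‖j x‖) ^ 2) := Real.sqrt_le_sqrt h1
      _ = Real.sqrt K * ‖j x‖ := Real.sqrt_sq (by positivity)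
  -- continuous linear maps between the two structures
  let jc : SymV V →L[ℝ] V := j.mkContinuous ((Real.sqrt α)⁻¹) hlow'
  let j'c : V →L[ℝ] SymV V := j'.mkContinuous (Real.sqrt K) (fun x => hup (j' x))
  -- completeness of the new structure
  letI : CompleteSpace (SymV V) := by
    have e : V ≃ᵤ SymV V :=
      { toFun := fun x => x
        invFun := fun x => x
        left_inv := fun _ => rfl
        right_inv := fun _ => rfl
        uniformContinuous_toFun := j'c.uniformContinuous
        uniformContinuous_invFun := jc.uniformContinuous }
    exact e.completeSpace_iff.mp ‹CompleteSpace V›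
  -- transfer the submodule
  let S' : Submodule ℝ (SymV V) := S.comap j
  have hS' : IsClosed (S' : Set (SymV V)) := by
    have : (S' : Set (SymV V)) = jc ⁻¹' (S : Set V) := rfl
    rw [this]
    exact hS.preimage jc.continuous
  -- the bilinear form on the new structure
  let aS : SymV V →ₗ[ℝ] SymV V →ₗ[ℝ] ℝ := (a.comp j).compl₂ j
  have haS : ∀ x y : SymV V, aS x y = a (j x) (j y) := fun _ _ => rfl
  have hb : ∀ x y : SymV V, |aS x y| ≤ K / α * ‖x‖ * ‖y‖ := by
    intro x y
    have h1 : α * (‖j x‖ * ‖j y‖) ≤ ‖x‖ * ‖y‖ := by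
      have h2 := mul_le_mul (hlow x) (hlow y) (by positivity) (hnormnn x)
      have h4 : Real.sqrt α * Real.sqrt α = α := Real.mul_self_sqrt hα.le
      have h3 : (Real.sqrt α * ‖j x‖) * (Real.sqrt α * ‖j y‖)
          = α * (‖j x‖ * ‖j y‖) := by
        calc (Real.sqrt α * ‖j x‖) * (Real.sqrt α * ‖j y‖)
            = (Real.sqrt α * Real.sqrt α) * (‖j x‖ * ‖j y‖) := by ring
          _ = α * (‖j x‖ * ‖j y‖) := by rw [h4]
      rw [← h3]; exact h2
    calc |aS x y| = |a (j x) (j y)| := by rw [haS]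
      _ ≤ K * ‖j x‖ * ‖j y‖ := hcontK _ _
      _ = K / α * (α * (‖j x‖ * ‖j y‖)) := by field_simp
      _ ≤ K / α * (‖x‖ * ‖y‖) := by
          exact mul_le_mul_of_nonneg_left h1 (by positivity)
      _ = K / α * ‖x‖ * ‖y‖ := by ring
  let aC : SymV V →L[ℝ] SymV V →L[ℝ] ℝ :=
    LinearMap.mkContinuous₂ aS (K / α) (fun x y => by rw [Real.norm_eq_abs]; exact hb x y)
  have hcoer' : ∀ v : SymV V, (1:ℝ) * ‖v‖ ^ 2 ≤ aC v v := by
    intro v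
    rw [one_mul, hn2 v]
    exact le_of_eq rfl
  -- the functional on the new structure
  let FL : SymV V →ₗ[ℝ] ℝ := (F : V →ₗ[ℝ] ℝ).comp j
  have hFb : ∀ x : SymV V, ‖FL x‖ ≤ (‖F‖ * (Real.sqrt α)⁻¹) * ‖x‖ := by
    intro x
    calc ‖FL x‖ = ‖F (j x)‖ := rfl
      _ ≤ ‖F‖ * ‖j x‖ := F.le_opNorm _
      _ ≤ ‖F‖ * ((Real.sqrt α)⁻¹ * ‖x‖) :=
          mul_le_mul_of_nonneg_left (hlow' x) (norm_nonneg F)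
      _ = (‖F‖ * (Real.sqrt α)⁻¹) * ‖x‖ := by ring
  let FC : SymV V →L[ℝ] ℝ := FL.mkContinuous (‖F‖ * (Real.sqrt α)⁻¹) hFb
  obtain ⟨u, huS', hu⟩ := aux_existsUnique aC 1 one_pos hcoer' FC S' hS'
  refine ⟨j u, Submodule.mem_comap.mp huS', fun v hv => ?_⟩
  have h2 : aC u (j' v) = FC (j' v) := hu (j' v) hv
  exact h2

/-- A priori convergence of Galerkin solutions on a nested sequence of closed subspaces
(Babuška–Vogelius). -/
theorem stmt_12 {V : Type*} [NormedAddCommGroup V] [NormedSpace ℝ V] [CompleteSpace V]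
    (a : V →ₗ[ℝ] V →ₗ[ℝ] ℝ)
    (Ccont : ℝ) (hcont : ∀ u v : V, |a u v| ≤ Ccont * ‖u‖ * ‖v‖)
    (α : ℝ) (hα : 0 < α) (hcoer : ∀ v : V, α * ‖v‖ ^ 2 ≤ a v v)
    (F : V →L[ℝ] ℝ)
    (Vl : ℕ → Submodule ℝ V)
    (hVlclosed : ∀ ℓ, IsClosed ((Vl ℓ : Set V)))
    (hnested : ∀ ℓ, Vl ℓ ≤ Vl (ℓ + 1)) :
    ∃ (u : ℕ → V) (uinf : V),
      (∀ ℓ, u ℓ ∈ Vl ℓ ∧ ∀ v ∈ Vl ℓ, a (u ℓ) v = F v) ∧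
      (∀ ℓ, ∀ u' ∈ Vl ℓ, (∀ v ∈ Vl ℓ, a u' v = F v) → u' = u ℓ) ∧
      (uinf ∈ (⨆ ℓ, Vl ℓ).topologicalClosure ∧
        ∀ v ∈ (⨆ ℓ, Vl ℓ).topologicalClosure, a uinf v = F v) ∧
      (∀ u' ∈ (⨆ ℓ, Vl ℓ).topologicalClosure,
        (∀ v ∈ (⨆ ℓ, Vl ℓ).topologicalClosure, a u' v = F v) → u' = uinf) ∧
      Tendsto (fun ℓ => ‖uinf - u ℓ‖) atTop (nhds 0) := by
  classical
  set K := max Ccont α with hKdef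
  have hK : 0 < K := lt_of_lt_of_le hα (le_max_right _ _)
  have hcontK : ∀ u v : V, |a u v| ≤ K * ‖u‖ * ‖v‖ := fun u v =>
    (hcont u v).trans (by
      have : Ccont * (‖u‖ * ‖v‖) ≤ K * (‖u‖ * ‖v‖) :=
        mul_le_mul_of_nonneg_right (le_max_left _ _) (by positivity)
      linarith [this])
  -- uniqueness of Galerkin solutions
  have uniq : ∀ (S : Submodule ℝ V) (w w' : V), w ∈ S → w' ∈ S →
      (∀ v ∈ S, a w v = F v) → (∀ v ∈ S, a w' v = F v) → w' = w := by
    intro S w w' hw hw' h h'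
    have hmem : w' - w ∈ S := sub_mem hw' hw
    have h0 : a (w' - w) (w' - w) = 0 := by
      have e1 : a w' (w' - w) = F (w' - w) := h' _ hmem
      have e2 : a w (w' - w) = F (w' - w) := h _ hmem
      have hx : a (w' - w) = a w' - a w := map_sub a w' w
      rw [hx, LinearMap.sub_apply, e1, e2, sub_self]
    have hc := hcoer (w' - w)
    have hn : ‖w' - w‖ ^ 2 = 0 := le_antisymm (by nlinarith) (sq_nonneg _)
    have : w' - w = 0 := norm_eq_zero.mp (sq_eq_zero_iff.mp hn)
    exact sub_eq_zero.mp this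
  -- existence on each level
  have hex : ∀ ℓ, ∃ u ∈ Vl ℓ, ∀ v ∈ Vl ℓ, a u v = F v := fun ℓ =>
    exists_sol a Ccont hcont α hα hcoer F (Vl ℓ) (hVlclosed ℓ)
  choose u hu hu2 using hex
  -- existence on the closure of the union
  set W : Submodule ℝ V := (⨆ ℓ, Vl ℓ).topologicalClosure with hW
  have hWclosed : IsClosed (W : Set V) := Submodule.isClosed_topologicalClosure _
  obtain ⟨uinf, huinfW, huinf⟩ := exists_sol a Ccont hcont α hα hcoer F W hWclosed
  have hmono : Monotone Vl := monotone_nat_of_le_succ hnested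
  have hleW : ∀ ℓ, Vl ℓ ≤ W := fun ℓ =>
    (le_iSup Vl ℓ).trans (Submodule.le_topologicalClosure _)
  refine ⟨u, uinf, fun ℓ => ⟨hu ℓ, hu2 ℓ⟩, fun ℓ u' hu' h' => uniq (Vl ℓ) (u ℓ) u' (hu ℓ) hu' (hu2 ℓ) h',
    ⟨huinfW, huinf⟩, fun u' hu' h' => uniq W uinf u' huinfW hu' huinf h', ?_⟩
  -- convergence via Céa's lemma
  rw [Metric.tendsto_atTop]
  intro ε hε
  have hεK : 0 < α * ε / K := by positivity
  have hcl : uinf ∈ closure (⋃ ℓ, (Vl ℓ : Set V)) := by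
    have h1 : uinf ∈ ((⨆ ℓ, Vl ℓ).topologicalClosure : Set V) := huinfW
    rw [Submodule.topologicalClosure_coe] at h1
    have h2 := Submodule.coe_iSup_of_chain (⟨Vl, hmono⟩ : ℕ →o Submodule ℝ V)
    simp only [OrderHom.coe_mk] at h2
    rwa [h2] at h1
  obtain ⟨v, hv, hvd⟩ := Metric.mem_closure_iff.mp hcl (α * ε / K) hεK
  obtain ⟨ℓ0, hvℓ0⟩ := Set.mem_iUnion.mp hv
  refine ⟨ℓ0, fun n hn => ?_⟩
  have hvn : v ∈ Vl n := hmono hn hvℓ0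
  set d := uinf - u n with hd
  -- Galerkin orthogonality
  have horth : ∀ w ∈ Vl n, a d w = 0 := by
    intro w hw
    have h1 : a uinf w = F w := huinf w (hleW n hw)
    have h2 : a (u n) w = F w := hu2 n w hw
    rw [hd, map_sub, LinearMap.sub_apply, h1, h2, sub_self]
  have key : a d d = a d (uinf - v) := by
    have h1 : a d (u n - v) = 0 := horth _ (sub_mem (hu n) hvn)
    have h2 : d = (uinf - v) - (u n - v) := by rw [hd]; abel
    calc a d d = a d ((uinf - v) - (u n - v)) := by rw [← h2]
      _ = a d (uinf - v) - a d (u n - v) := map_sub _ _ _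
      _ = a d (uinf - v) := by rw [h1, sub_zero]
  have hdist : dist ‖d‖ 0 = ‖d‖ := by
    rw [Real.dist_eq, sub_zero, abs_of_nonneg (norm_nonneg d)]
  show dist ‖d‖ 0 < ε
  rw [hdist]
  have hvnorm : ‖uinf - v‖ < α * ε / K := by rwa [← dist_eq_norm]
  by_cases hd0 : ‖d‖ = 0
  · rw [hd0]; exact hε
  · have hdpos : 0 < ‖d‖ := lt_of_le_of_ne (norm_nonneg d) (Ne.symm hd0)
    have c1 : α * ‖d‖ ^ 2 ≤ K * ‖d‖ * ‖uinf - v‖ := by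
      calc α * ‖d‖ ^ 2 ≤ a d d := hcoer d
        _ = a d (uinf - v) := key
        _ ≤ |a d (uinf - v)| := le_abs_self _
        _ ≤ K * ‖d‖ * ‖uinf - v‖ := hcontK _ _
    have c2 : α * ‖d‖ ≤ K * ‖uinf - v‖ := by nlinarith
    have c3 : K * ‖uinf - v‖ < K * (α * ε / K) :=
      mul_lt_mul_of_pos_left hvnorm hK
    have c4 : K * (α * ε / K) = α * ε := by field_simp
    nlinarith
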